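/- Let f : ℝⁿ → ℝ be a multivariate polynomial, x ∈ ℝⁿ an input, and μ a probability measure on ℝⁿ with finite moments of all orders. For every i ∈ N, the Expected Gradients attribution satisfies E_{b∼μ}[ (x_i − b_i) · ∫_0^1 (∂f/∂x_i)(b + α(x − b)) dα ] = E_{b∼μ}[ ∑_{κ ∈ Ω_i} φ(κ | b) + ∑_{S ⊆ N, |S| > 1, i ∈ S} ∑_{κ ∈ Ω_S} (κ_i / ∑_{j ∈ N} κ_j) · I(κ | b) ]. -/

import Mathlib

open Finset MeasureTheory

lemma monoHasFDeriv {n : ℕ} (b z : Fin n → ℝ) (κ : Fin n →₀ ℕ) :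
    HasFDerivAt (fun y : Fin n → ℝ => ∏ j, (y j - b j) ^ κ j)
      (∑ j, (∏ l ∈ Finset.univ.erase j, (z l - b l) ^ κ l) •
        (((κ j : ℝ) * (z j - b j) ^ (κ j - 1)) •
          ContinuousLinearMap.proj (R := ℝ) (φ := fun _ : Fin n => ℝ) j)) z := by
  refine HasFDerivAt.finset_prod (fun j _ => ?_)
  have h1 : HasFDerivAt (fun y : Fin n → ℝ => y j - b j)
      (ContinuousLinearMap.proj (R := ℝ) (φ := fun _ : Fin n => ℝ) j) z :=
    (hasFDerivAt_apply j z).sub_const _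
  exact (hasDerivAt_pow (κ j) (z j - b j)).comp_hasFDerivAt z h1

lemma monoApply {n : ℕ} (b z : Fin n → ℝ) (κ : Fin n →₀ ℕ) (i : Fin n) :
    (∑ j, (∏ l ∈ Finset.univ.erase j, (z l - b l) ^ κ l) •
        (((κ j : ℝ) * (z j - b j) ^ (κ j - 1)) •
          ContinuousLinearMap.proj (R := ℝ) (φ := fun _ : Fin n => ℝ) j)) (Pi.single i 1)
      = (κ i : ℝ) * ((z i - b i) ^ (κ i - 1) * ∏ l ∈ Finset.univ.erase i, (z l - b l) ^ κ l) := by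
  simp only [ContinuousLinearMap.sum_apply, ContinuousLinearMap.smul_apply,
    ContinuousLinearMap.proj_apply, Pi.single_apply, smul_eq_mul, mul_ite, mul_one, mul_zero]
  rw [Finset.sum_ite_eq' Finset.univ i]
  simp [mul_comm, mul_assoc, mul_left_comm]

lemma fderivFormula {n : ℕ} (b z : Fin n → ℝ) (p : MvPolynomial (Fin n) ℝ)
    (f : (Fin n → ℝ) → ℝ)
    (hf : ∀ y, f y = ∑ κ ∈ p.support, MvPolynomial.coeff κ p * ∏ j, (y j - b j) ^ κ j)
    (i : Fin n) :
    fderiv ℝ f z (Pi.single i 1)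
      = ∑ κ ∈ p.support, MvPolynomial.coeff κ p *
          ((κ i : ℝ) * ((z i - b i) ^ (κ i - 1) * ∏ l ∈ Finset.univ.erase i, (z l - b l) ^ κ l)) := by
  have hF : HasFDerivAt f
      (∑ κ ∈ p.support, MvPolynomial.coeff κ p •
        (∑ j, (∏ l ∈ Finset.univ.erase j, (z l - b l) ^ κ l) •
          (((κ j : ℝ) * (z j - b j) ^ (κ j - 1)) •
            ContinuousLinearMap.proj (R := ℝ) (φ := fun _ : Fin n => ℝ) j))) z := by
    rw [funext hf]
    exact HasFDerivAt.fun_sum fun κ _ => (monoHasFDeriv b z κ).const_mul (MvPolynomial.coeff κ p)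
  rw [hF.fderiv]
  rw [ContinuousLinearMap.sum_apply]
  refine Finset.sum_congr rfl fun κ _ => ?_
  rw [ContinuousLinearMap.smul_apply, monoApply, smul_eq_mul]

lemma innerIntegral {n : ℕ} (x b : Fin n → ℝ) (p : MvPolynomial (Fin n) ℝ)
    (f : (Fin n → ℝ) → ℝ)
    (hf : ∀ y, f y = ∑ κ ∈ p.support, MvPolynomial.coeff κ p * ∏ j, (y j - b j) ^ κ j)
    (i : Fin n) :
    (x i - b i) * ∫ α in (0:ℝ)..1,
        fderiv ℝ f (fun j => b j + α * (x j - b j)) (Pi.single i 1)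
      = ∑ κ ∈ p.support, ((κ i : ℝ) / ∑ j, (κ j : ℝ)) *
          (MvPolynomial.coeff κ p * ∏ j, (x j - b j) ^ κ j) := by
  set v : Fin n → ℝ := fun j => x j - b j with hv
  have hpt : ∀ α : ℝ, fderiv ℝ f (fun j => b j + α * v j) (Pi.single i 1)
      = ∑ κ ∈ p.support, MvPolynomial.coeff κ p *
          ((κ i : ℝ) * ((α * v i) ^ (κ i - 1) * ∏ l ∈ Finset.univ.erase i, (α * v l) ^ κ l)) := by
    intro α
    have := fderivFormula b (fun j => b j + α * v j) p f hf i
    simpa using this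
  have hint : ∫ α in (0:ℝ)..1,
        fderiv ℝ f (fun j => b j + α * v j) (Pi.single i 1)
      = ∑ κ ∈ p.support, ∫ α in (0:ℝ)..1, MvPolynomial.coeff κ p *
          ((κ i : ℝ) * ((α * v i) ^ (κ i - 1) * ∏ l ∈ Finset.univ.erase i, (α * v l) ^ κ l)) := by
    rw [intervalIntegral.integral_congr (g := fun α => ∑ κ ∈ p.support,
        MvPolynomial.coeff κ p *
          ((κ i : ℝ) * ((α * v i) ^ (κ i - 1) * ∏ l ∈ Finset.univ.erase i, (α * v l) ^ κ l)))
        (fun α _ => hpt α)]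
    refine intervalIntegral.integral_finset_sum (fun κ _ => ?_)
    refine Continuous.intervalIntegrable ?_ _ _
    fun_prop
  rw [hint, Finset.mul_sum]
  refine Finset.sum_congr rfl fun κ hκ => ?_
  by_cases h0 : κ i = 0
  · simp [h0]
  · -- κ i ≥ 1
    set d : ℕ := (κ i - 1) + ∑ l ∈ Finset.univ.erase i, κ l with hd
    have hsum : (∑ j, κ j) = d + 1 := by
      rw [hd]
      have h2 := Finset.add_sum_erase Finset.univ (⇑κ) (Finset.mem_univ i)
      omega
    have hgκ : ∀ α : ℝ, MvPolynomial.coeff κ p *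
          ((κ i : ℝ) * ((α * v i) ^ (κ i - 1) * ∏ l ∈ Finset.univ.erase i, (α * v l) ^ κ l))
        = (MvPolynomial.coeff κ p * (κ i : ℝ) *
            (v i ^ (κ i - 1) * ∏ l ∈ Finset.univ.erase i, v l ^ κ l)) * α ^ d := by
      intro α
      simp only [mul_pow, Finset.prod_mul_distrib, Finset.prod_pow_eq_pow_sum, hd, pow_add]
      ring
    rw [intervalIntegral.integral_congr (fun α _ => hgκ α),
      intervalIntegral.integral_const_mul, integral_pow]
    have hd0 : ((d : ℝ) + 1) ≠ 0 := by positivity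
    have hcast : (∑ j, (κ j : ℝ)) = (d : ℝ) + 1 := by
      rw [← Nat.cast_sum, hsum]; push_cast; ring
    have hprod : (∏ j, v j ^ κ j)
        = v i ^ κ i * ∏ l ∈ Finset.univ.erase i, v l ^ κ l := by
      rw [Finset.mul_prod_erase Finset.univ (fun j => v j ^ κ j) (Finset.mem_univ i)]
    have hvi : v i ^ κ i = v i * v i ^ (κ i - 1) := by
      conv_lhs => rw [show κ i = (κ i - 1) + 1 by omega]
      rw [pow_succ]; ring
    rw [hcast, hprod, hvi]
    push_cast
    field_simp
    ring

lemma partitionSum {n : ℕ} (i : Fin n) (s : Finset (Fin n →₀ ℕ)) (t : (Fin n →₀ ℕ) → ℝ) :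
    ∑ κ ∈ s, ((κ i : ℝ) / ∑ j, (κ j : ℝ)) * t κ
      = (∑ κ ∈ s.filter (fun κ => κ.support = {i}), t κ)
      + ∑ S ∈ (univ : Finset (Fin n)).powerset.filter (fun S => 1 < S.card ∧ i ∈ S),
          ∑ κ ∈ s.filter (fun κ => κ.support = S),
            ((κ i : ℝ) / ∑ j, (κ j : ℝ)) * t κ := by
  classical
  rw [← Finset.sum_fiberwise_of_maps_to (g := fun κ : Fin n →₀ ℕ => κ.support)
      (t := (univ : Finset (Fin n)).powerset)
      (fun κ _ => Finset.mem_powerset.2 (Finset.subset_univ _))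
      (fun κ => ((κ i : ℝ) / ∑ j, (κ j : ℝ)) * t κ)]
  rw [← Finset.sum_filter_add_sum_filter_not (univ : Finset (Fin n)).powerset
      (fun S => 1 < S.card ∧ i ∈ S)]
  rw [add_comm]
  congr 1
  have hmem : {i} ∈ (univ : Finset (Fin n)).powerset.filter
      (fun S => ¬(1 < S.card ∧ i ∈ S)) := by
    simp
  rw [Finset.sum_eq_single_of_mem {i} hmem]
  · refine Finset.sum_congr rfl fun κ hκ => ?_
    have hsupp : κ.support = {i} := (Finset.mem_filter.1 hκ).2
    have hi : κ i ≠ 0 := by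
      have : i ∈ κ.support := by rw [hsupp]; exact Finset.mem_singleton_self i
      exact Finsupp.mem_support_iff.1 this
    have hsum : (∑ j, (κ j : ℝ)) = (κ i : ℝ) := by
      refine Finset.sum_eq_single i (fun j _ hj => ?_) (by simp)
      have : j ∉ κ.support := by rw [hsupp]; simp [hj]
      simp [Finsupp.notMem_support_iff.1 this]
    rw [hsum, div_self (by exact_mod_cast hi), one_mul]
  · intro S hS hne
    refine Finset.sum_eq_zero fun κ hκ => ?_
    have hsupp : κ.support = S := (Finset.mem_filter.1 hκ).2
    have hnP : ¬(1 < S.card ∧ i ∈ S) := (Finset.mem_filter.1 hS).2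
    have hiS : i ∉ S := by
      intro hiS
      have hcard : S.card ≤ 1 := by
        by_contra h
        exact hnP ⟨by omega, hiS⟩
      have : S = {i} := by
        have h1 : 1 ≤ S.card := Finset.card_pos.2 ⟨i, hiS⟩
        have : S.card = 1 := le_antisymm hcard h1
        obtain ⟨a, ha⟩ := Finset.card_eq_one.1 this
        subst ha
        simp_all
      exact hne this
    have : κ i = 0 := Finsupp.notMem_support_iff.1 (by rw [hsupp]; exact hiS)
    simp [this]


/-- Expected Gradients.  `f : ℝⁿ → ℝ` is a polynomial function; for each
baseline `b ∈ ℝⁿ`, `q b` is its (unique, finite) expansion in powers of `x − b`.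
`μ` is a probability measure on `ℝⁿ` with finite moments of all orders (every polynomial
function of `b` is `μ`-integrable).  Then the expected Integrated-Gradients attribution of
variable `i` equals the expectation of the allocated Taylor effects. -/
theorem expected_gradients {n : ℕ} (hn : 1 ≤ n) (f : (Fin n → ℝ) → ℝ) (x : Fin n → ℝ)
    (μ : Measure (Fin n → ℝ)) [IsProbabilityMeasure μ]
    (hmom : ∀ p : MvPolynomial (Fin n) ℝ,
      Integrable (fun b : Fin n → ℝ => MvPolynomial.eval b p) μ)
    (q : (Fin n → ℝ) → MvPolynomial (Fin n) ℝ)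
    (hq : ∀ b : Fin n → ℝ, ∀ y : Fin n → ℝ,
      f y = ∑ κ ∈ (q b).support, MvPolynomial.coeff κ (q b) * ∏ j, (y j - b j) ^ κ j)
    (i : Fin n) :
    ∫ b, ((x i - b i) *
        ∫ α in (0:ℝ)..1,
          fderiv ℝ f (fun j => b j + α * (x j - b j)) (Pi.single i 1)) ∂μ
      = ∫ b,
          ((∑ κ ∈ (q b).support.filter (fun κ => κ.support = {i}),
              MvPolynomial.coeff κ (q b) * ∏ j, (x j - b j) ^ κ j)
          + ∑ S ∈ (univ : Finset (Fin n)).powerset.filter (fun S => 1 < S.card ∧ i ∈ S),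
              ∑ κ ∈ (q b).support.filter (fun κ => κ.support = S),
                ((κ i : ℝ) / ∑ j, (κ j : ℝ)) *
                  (MvPolynomial.coeff κ (q b) * ∏ j, (x j - b j) ^ κ j)) ∂μ := by
  refine integral_congr_ae (Filter.Eventually.of_forall fun b => ?_)
  exact (innerIntegral x b (q b) f (hq b) i).trans
    (partitionSum i (q b).support
      (fun κ => MvPolynomial.coeff κ (q b) * ∏ j, (x j - b j) ^ κ j))
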